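/- Let k be a field of characteristic 2 and let m ≤ M be positive odd integers with M − m even. Write p = t^{−m}·∑_{i≥0} p_i t^i, q = t^{−M}·∑_{i≥0} q_i t^i, β = t^{−(M−m)/2}·∑_{i≥0} b_i t^i in k((t)) with p_0 ≠ 0, q_0 ≠ 0, b_0 ≠ 0, and let α = t^{(−M+1)/2}·∑_{i≥0} a_i t^i ∈ k((t)). If ordₜ(q + β²p + α² − α) ≥ −M + (m+1)/2, then for every integer j with 0 ≤ j ≤ ⌊(2m+3)/4⌋ − ⌊(m+3)/4⌋ − 1 one has a_j² = q_{2j+1} + ∑_{i₁+i₂=j} p_{2i₁+1}·b_{i₂}², where the sum runs over pairs of nonnegative integers i₁, i₂ with i₁ + i₂ = j. -/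

import Mathlib

open Finset

section Aux

variable {k : Type*} [Field k]

/-- In char 2, a symmetric convolution sum of odd length collapses to the middle square. -/
lemma aux_sum_pair_even [CharP k 2] (c : ℕ → k) (j : ℕ) :
    ∑ i ∈ range (2 * j + 1), c i * c (2 * j - i) = c j ^ 2 := by
  have hj : j ∈ range (2 * j + 1) := by simp; omega
  rw [← Finset.add_sum_erase _ _ hj]
  have h0 : ∑ i ∈ (range (2 * j + 1)).erase j, c i * c (2 * j - i) = 0 := by
    refine Finset.sum_involution (fun a _ => 2 * j - a) ?_ ?_ ?_ ?_
    · intro a ha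
      have ha' : a ≤ 2 * j ∧ a ≠ j := by
        simp [Finset.mem_erase, Finset.mem_range] at ha; omega
      have : 2 * j - (2 * j - a) = a := by omega
      rw [this, mul_comm]
      exact CharTwo.add_self_eq_zero _
    · intro a ha _
      have ha' : a ≤ 2 * j ∧ a ≠ j := by
        simp [Finset.mem_erase, Finset.mem_range] at ha; omega
      show 2 * j - a ≠ a
      omega
    · intro a ha
      have ha' : a ≤ 2 * j ∧ a ≠ j := by
        simp [Finset.mem_erase, Finset.mem_range] at ha; omega
      simp [Finset.mem_erase, Finset.mem_range]; omega
    · intro a ha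
      have ha' : a ≤ 2 * j ∧ a ≠ j := by
        simp [Finset.mem_erase, Finset.mem_range] at ha; omega
      show 2 * j - (2 * j - a) = a
      omega
  rw [h0, add_zero]
  have : 2 * j - j = j := by omega
  rw [this, sq]

/-- In char 2, a symmetric convolution sum of even length vanishes. -/
lemma aux_sum_pair_odd [CharP k 2] (c : ℕ → k) (j : ℕ) :
    ∑ i ∈ range (2 * j + 2), c i * c (2 * j + 1 - i) = 0 := by
  refine Finset.sum_involution (fun a _ => 2 * j + 1 - a) ?_ ?_ ?_ ?_
  · intro a ha
    have ha' : a ≤ 2 * j + 1 := by simp [Finset.mem_range] at ha; omega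
    have : 2 * j + 1 - (2 * j + 1 - a) = a := by omega
    rw [this, mul_comm]
    exact CharTwo.add_self_eq_zero _
  · intro a ha _
    have ha' : a ≤ 2 * j + 1 := by simp [Finset.mem_range] at ha; omega
    show 2 * j + 1 - a ≠ a
    omega
  · intro a ha
    have ha' : a ≤ 2 * j + 1 := by simp [Finset.mem_range] at ha; omega
    simp [Finset.mem_range]; omega
  · intro a ha
    have ha' : a ≤ 2 * j + 1 := by simp [Finset.mem_range] at ha; omega
    show 2 * j + 1 - (2 * j + 1 - a) = a
    omega

/-- Coefficients of a product of Laurent series with supports bounded below. -/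
lemma aux_mul_coeff_conv (f g : LaurentSeries k) (A B : ℤ)
    (hf : ∀ n : ℤ, n < A → f.coeff n = 0) (hg : ∀ n : ℤ, n < B → g.coeff n = 0)
    (d : ℕ) :
    (f * g).coeff (A + B + d) =
      ∑ i ∈ range (d + 1), f.coeff (A + i) * g.coeff (B + ((d : ℤ) - i)) := by
  classical
  rw [HahnSeries.coeff_mul]
  have hsub : Finset.antidiagonal f.isPWO_support g.isPWO_support (A + B + d) ⊆
      (range (d + 1)).image (fun i : ℕ => ((A + i : ℤ), (B + ((d : ℤ) - i)))) := by
    rintro ⟨x, y⟩ hxy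
    rw [Finset.mem_addAntidiagonal] at hxy
    obtain ⟨hx, hy, hsum⟩ := hxy
    have hxA : A ≤ x := by
      by_contra h
      exact hx (hf x (by omega))
    have hyB : B ≤ y := by
      by_contra h
      exact hy (hg y (by omega))
    refine Finset.mem_image.2 ⟨(x - A).toNat, ?_, ?_⟩
    · simp only [Finset.mem_range]; omega
    · simp only [Prod.mk.injEq]
      constructor <;> omega
  rw [Finset.sum_subset hsub ?_]
  · rw [Finset.sum_image ?_]
    intro a _ b _ hab
    simp only [Prod.mk.injEq] at hab
    omega
  · rintro ⟨x, y⟩ hxy hnot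
    rw [Finset.mem_image] at hxy
    obtain ⟨i, hi, heq⟩ := hxy
    rw [Finset.mem_addAntidiagonal] at hnot
    push_neg at hnot
    simp only [Prod.mk.injEq] at heq
    obtain ⟨hxe, hye⟩ := heq
    by_cases hx : x ∈ f.support
    · by_cases hy : y ∈ g.support
      · exact absurd (by omega) (hnot hx hy)
      · rw [HahnSeries.mem_support, not_not] at hy
        simp [hy]
    · rw [HahnSeries.mem_support, not_not] at hx
      simp [hx]

/-- Products of Laurent series with supports bounded below vanish below the sum of bounds. -/
lemma aux_mul_coeff_vanish (f g : LaurentSeries k) (A B : ℤ)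
    (hf : ∀ n : ℤ, n < A → f.coeff n = 0) (hg : ∀ n : ℤ, n < B → g.coeff n = 0)
    (n : ℤ) (hn : n < A + B) : (f * g).coeff n = 0 := by
  rw [HahnSeries.coeff_mul]
  apply Finset.sum_eq_zero
  rintro ⟨x, y⟩ hxy
  rw [Finset.mem_addAntidiagonal] at hxy
  obtain ⟨hx, hy, hsum⟩ := hxy
  have hxA : A ≤ x := by
    by_contra h
    exact hx (hf x (by omega))
  have hyB : B ≤ y := by
    by_contra h
    exact hy (hg y (by omega))
  omega

/-- Even coefficients of a square in char 2. -/
lemma aux_sq_coeff_even [CharP k 2] (f : LaurentSeries k) (A : ℤ)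
    (hf : ∀ n : ℤ, n < A → f.coeff n = 0) (j : ℕ) :
    (f * f).coeff (A + A + (2 * j : ℕ)) = (f.coeff (A + j)) ^ 2 := by
  rw [aux_mul_coeff_conv f f A A hf hf (2 * j)]
  rw [show ∑ i ∈ range (2 * j + 1), f.coeff (A + i) * f.coeff (A + (((2 * j : ℕ) : ℤ) - i)) =
      ∑ i ∈ range (2 * j + 1),
        (fun l : ℕ => f.coeff (A + l)) i * (fun l : ℕ => f.coeff (A + l)) (2 * j - i) from
    Finset.sum_congr rfl fun i hi => by
      rw [Finset.mem_range] at hi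
      congr 2
      push_cast
      omega]
  exact aux_sum_pair_even (fun l : ℕ => f.coeff (A + l)) j

/-- Odd coefficients of a square in char 2 vanish. -/
lemma aux_sq_coeff_odd [CharP k 2] (f : LaurentSeries k) (A : ℤ)
    (hf : ∀ n : ℤ, n < A → f.coeff n = 0) (j : ℕ) :
    (f * f).coeff (A + A + (2 * j + 1 : ℕ)) = 0 := by
  rw [aux_mul_coeff_conv f f A A hf hf (2 * j + 1)]
  rw [show ∑ i ∈ range (2 * j + 1 + 1), f.coeff (A + i) * f.coeff (A + (((2 * j + 1 : ℕ) : ℤ) - i)) =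
      ∑ i ∈ range (2 * j + 2),
        (fun l : ℕ => f.coeff (A + l)) i * (fun l : ℕ => f.coeff (A + l)) (2 * j + 1 - i) from
    Finset.sum_congr (by ring_nf) fun i hi => by
      rw [Finset.mem_range] at hi
      congr 2
      push_cast
      omega]
  exact aux_sum_pair_odd (fun l : ℕ => f.coeff (A + l)) j

end Aux

/-- With `p = t^{−m}·∑ pᵢtⁱ`, `q = t^{−M}·∑ qᵢtⁱ`,
`β = t^{−(M−m)/2}·∑ bᵢtⁱ` (leading coefficients nonzero),
`α = t^{(−M+1)/2}·∑ aᵢtⁱ`, and `ordₜ(q + β²p + α² − α) ≥ −M + (m+1)/2`, one has, for all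
`0 ≤ j ≤ ⌊(2m+3)/4⌋ − ⌊(m+3)/4⌋ − 1`:
`a_j² = q_{2j+1} + ∑_{i₁+i₂=j} p_{2i₁+1}·b_{i₂}²`.
(Here `pᵢ = p.coeff (−m + i)`, `qᵢ = q.coeff (−M + i)`, `bᵢ = β.coeff (−(M−m)/2 + i)`,
`aᵢ = α.coeff ((−M+1)/2 + i)`.) -/
theorem laurent_odd_coefficient_relations
    (k : Type*) [Field k] (hchar : CharP k 2)
    (m M : ℤ) (hm : 0 < m) (hmM : m ≤ M) (hmodd : Odd m) (hModd : Odd M)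
    (heven : Even (M - m))
    (p q β α : LaurentSeries k)
    (hp0 : p.coeff (-m) ≠ 0) (hp : ∀ n : ℤ, n < -m → p.coeff n = 0)
    (hq0 : q.coeff (-M) ≠ 0) (hq : ∀ n : ℤ, n < -M → q.coeff n = 0)
    (hβ0 : β.coeff (-((M - m) / 2)) ≠ 0)
    (hβ : ∀ n : ℤ, n < -((M - m) / 2) → β.coeff n = 0)
    (hα : ∀ n : ℤ, n < (-M + 1) / 2 → α.coeff n = 0)
    (hyp : ∀ n : ℤ, n < -M + (m + 1) / 2 → (q + β ^ 2 * p + α ^ 2 - α).coeff n = 0) :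
    ∀ j : ℕ, (j : ℤ) ≤ (2 * m + 3) / 4 - (m + 3) / 4 - 1 →
      (α.coeff ((-M + 1) / 2 + j)) ^ 2 =
        q.coeff (-M + (2 * j + 1)) +
          ∑ i ∈ Finset.range (j + 1),
            p.coeff (-m + (2 * i + 1)) * (β.coeff (-((M - m) / 2) + ((j : ℤ) - i))) ^ 2 := by
  haveI : CharP k 2 := hchar
  intro j hj
  obtain ⟨r, hr⟩ := hmodd
  obtain ⟨s, hs⟩ := hModd
  obtain ⟨u, hu⟩ := heven
  set A : ℤ := (-M + 1) / 2 with hA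
  set B : ℤ := -((M - m) / 2) with hB
  have hAval : 2 * A = -M + 1 := by rw [hA]; omega
  have hBval : 2 * B = -(M - m) := by rw [hB]; omega
  set n : ℤ := -M + (2 * (j : ℤ) + 1) with hn
  have hjlt : 2 * (j : ℤ) + 1 < (m + 1) / 2 := by omega
  have h1 := hyp n (by omega)
  rw [HahnSeries.coeff_sub, HahnSeries.coeff_add, HahnSeries.coeff_add] at h1
  have hαn : α.coeff n = 0 := hα n (by omega)
  -- α² coefficient
  have hα2 : (α ^ 2).coeff n = (α.coeff (A + j)) ^ 2 := by
    rw [pow_two]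
    have := aux_sq_coeff_even α A hα j
    rw [show A + A + ((2 * j : ℕ) : ℤ) = n from by push_cast; omega] at this
    exact this
  -- β² lower bound
  have hβ2 : ∀ n' : ℤ, n' < 2 * B → (β * β).coeff n' = 0 := fun n' hn' =>
    aux_mul_coeff_vanish β β B B hβ hβ n' (by omega)
  -- β²p coefficient
  have hβp : (β ^ 2 * p).coeff n =
      ∑ i ∈ range (2 * j + 2), (β * β).coeff (2 * B + i) * p.coeff (-m + ((2 * (j:ℤ) + 1) - i)) := by
    rw [pow_two]
    have := aux_mul_coeff_conv (β * β) p (2 * B) (-m) hβ2 hp (2 * j + 1)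
    rw [show 2 * B + -m + ((2 * j + 1 : ℕ) : ℤ) = n from by push_cast; omega] at this
    rw [this]
    refine Finset.sum_congr (by norm_num) fun i hi => ?_
    have hc : ((2 * j + 1 : ℕ) : ℤ) - i = (2 * (j:ℤ) + 1) - i := by push_cast; ring
    rw [hc]
  -- restrict the β²p sum to even indices
  have himg : (range (j + 1)).image (fun i₂ => 2 * i₂) ⊆ range (2 * j + 2) := by
    intro x hx
    rw [Finset.mem_image] at hx
    obtain ⟨i₂, hi₂, rfl⟩ := hx
    rw [Finset.mem_range] at hi₂ ⊢
    omega
  have hβp2 : (β ^ 2 * p).coeff n =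
      ∑ i₂ ∈ range (j + 1),
        (β.coeff (B + i₂)) ^ 2 * p.coeff (-m + ((2 * (j:ℤ) + 1) - 2 * i₂)) := by
    rw [hβp, ← Finset.sum_subset himg ?_]
    · rw [Finset.sum_image (fun a _ b _ hab => by omega)]
      refine Finset.sum_congr rfl fun i₂ hi₂ => ?_
      have hco : (β * β).coeff (2 * B + (2 * i₂ : ℕ)) = (β.coeff (B + i₂)) ^ 2 := by
        have := aux_sq_coeff_even β B hβ i₂
        rw [show B + B + ((2 * i₂ : ℕ) : ℤ) = 2 * B + ((2 * i₂ : ℕ) : ℤ) from by ring] at this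
        exact this
      rw [← hco]
      congr 2 <;> push_cast <;> ring
    · intro x hx hnot
      rw [Finset.mem_range] at hx
      rcases Nat.even_or_odd x with he | ho
      · exfalso
        obtain ⟨l, hl⟩ := he
        exact hnot (Finset.mem_image.2 ⟨l, Finset.mem_range.2 (by omega), by omega⟩)
      · obtain ⟨l, hl⟩ := ho
        have hco : (β * β).coeff (2 * B + (x : ℕ)) = 0 := by
          have := aux_sq_coeff_odd β B hβ l
          rw [show B + B + ((2 * l + 1 : ℕ) : ℤ) = 2 * B + ((x : ℕ) : ℤ) from by
            push_cast; omega] at this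
          exact this
        rw [hco, zero_mul]
  -- reindex to match the goal sum
  have hsum : ∑ i₂ ∈ range (j + 1),
        (β.coeff (B + i₂)) ^ 2 * p.coeff (-m + ((2 * (j:ℤ) + 1) - 2 * i₂)) =
      ∑ i ∈ range (j + 1),
        p.coeff (-m + (2 * (i:ℤ) + 1)) * (β.coeff (B + ((j : ℤ) - i))) ^ 2 := by
    rw [← Finset.sum_range_reflect]
    refine Finset.sum_congr rfl fun i hi => ?_
    rw [Finset.mem_range] at hi
    rw [mul_comm]
    congr 2
    · push_cast; omega
    · congr 1
      push_cast; omega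
  -- finish
  have h2 : (2 : k) = 0 := by
    have := CharP.cast_eq_zero k 2
    exact_mod_cast this
  rw [hαn, hα2, hβp2, hsum] at h1
  linear_combination h1 - (q.coeff n + ∑ i ∈ range (j + 1),
    p.coeff (-m + (2 * (i:ℤ) + 1)) * (β.coeff (B + ((j : ℤ) - i))) ^ 2) * h2
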